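/- arXiv:math-ph/0501074 — 2 statements merged into one kernel-verified Lean document; each statement's English description precedes it below -/
import Mathlib

section
/- Let q : ℝ → ℝ be twice differentiable and satisfy the Painlevé II equation q''(s) = s q(s) + 2 q(s)³, and set r = q'. For (ζ, s) ∈ ℝ² define the 2×2 real matrices A(ζ, s) = [[4ζq(s), 4ζ² + s + 2q(s)² + 2r(s)], [−4ζ² − s − 2q(s)² + 2r(s), −4ζq(s)]] and B(ζ, s) = [[q(s), ζ], [−ζ, −q(s)]]. Then the zero-curvature (compatibility) equation holds identically: ∂_s A(ζ, s) − ∂_ζ B(ζ, s) + A(ζ, s) B(ζ, s) − B(ζ, s) A(ζ, s) = 0 for all ζ, s ∈ ℝ. -/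
noncomputable section

/-- The Flaschka–Newell matrix `A(ζ,s)` built from `q` and `r`. -/
def Amat (q r : ℝ → ℝ) (ζ s : ℝ) : Matrix (Fin 2) (Fin 2) ℝ :=
  !![4 * ζ * q s, 4 * ζ ^ 2 + s + 2 * (q s) ^ 2 + 2 * r s;
     -(4 * ζ ^ 2) - s - 2 * (q s) ^ 2 + 2 * r s, -(4 * ζ * q s)]

/-- The Flaschka–Newell matrix `B(ζ,s)` built from `q`. -/
def Bmat (q : ℝ → ℝ) (ζ s : ℝ) : Matrix (Fin 2) (Fin 2) ℝ :=
  !![q s, ζ; -ζ, -(q s)]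

/-- If `q` solves Painlevé II, `q'' = s q + 2 q³`, and `r = q'`, then the
zero-curvature equation `∂_s A − ∂_ζ B + A B − B A = 0` holds identically (entrywise). -/
theorem zero_curvature
    (q r : ℝ → ℝ)
    (hq : ∀ s : ℝ, HasDerivAt q (r s) s)
    (hr : ∀ s : ℝ, HasDerivAt r (s * q s + 2 * q s ^ 3) s) :
    ∀ (ζ s : ℝ) (i j : Fin 2),
      deriv (fun s' => Amat q r ζ s' i j) s - deriv (fun ζ' => Bmat q ζ' s i j) ζ
          + (Amat q r ζ s * Bmat q ζ s - Bmat q ζ s * Amat q r ζ s) i j = 0 := by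
  intro ζ s i j
  have hq2 : HasDerivAt (fun s' => q s' ^ 2) (2 * q s * r s) s := by
    simpa [mul_comm, mul_assoc] using! ((hq s).pow 2)
  fin_cases i <;> fin_cases j <;>
    simp [Amat, Bmat, Matrix.mul_apply, Fin.sum_univ_two, Matrix.sub_apply]
  · rw [(hq s).deriv]; ring
  · have h : HasDerivAt (fun s' => 4 * ζ ^ 2 + s' + 2 * q s' ^ 2 + 2 * r s')
        (1 + 2 * (2 * q s * r s) + 2 * (s * q s + 2 * q s ^ 3)) s := by
      simpa using! (((hasDerivAt_const s (4 * ζ ^ 2)).add (hasDerivAt_id s)).add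
        (hq2.const_mul 2)).add ((hr s).const_mul 2)
    rw [h.deriv]; ring
  · have h : HasDerivAt (fun s' => -(4 * ζ ^ 2) - s' - 2 * q s' ^ 2 + 2 * r s')
        (-1 - 2 * (2 * q s * r s) + 2 * (s * q s + 2 * q s ^ 3)) s := by
      simpa using! (((hasDerivAt_const s (-(4 * ζ ^ 2))).sub (hasDerivAt_id s)).sub
        (hq2.const_mul 2)).add ((hr s).const_mul 2)
    rw [h.deriv]; ring
  · rw [(hq s).deriv]; ring

end
end

section
/- Let a < b be real numbers and let ψ : ℝ → ℝ be a bounded measurable function vanishing outside [a, b]. Define g(z) = ∫_a^b Log(z − s) ψ(s) ds for z ∈ ℂ \ ℝ, where Log is the principal branch of the logarithm. Then for every x ∈ ℝ, lim_{ε→0+} ( g(x + iε) − g(x − iε) ) = 2πi ∫_x^b ψ(s) ds (with the convention that the integral is 0 when x ≥ b and equals ∫_a^b ψ when x ≤ a). -/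
open Filter Topology intervalIntegral

/-- For `ψ` bounded measurable vanishing outside `[a,b]` and
`g(z) = ∫_a^b Log(z − s) ψ(s) ds` (principal branch), the jump of `g` across the real
axis is `g₊(x) − g₋(x) = 2πi ∫_x^b ψ(s) ds` for every `x ∈ ℝ`. -/
theorem gfunction_jump
    (a b : ℝ) (hab : a < b) (ψ : ℝ → ℝ)
    (hmeas : Measurable ψ) (hbdd : ∃ M : ℝ, ∀ x, |ψ x| ≤ M)
    (hsupp : ∀ x : ℝ, x ∉ Set.Icc a b → ψ x = 0) :
    ∀ x : ℝ,
      Tendsto (fun ε : ℝ =>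
          (∫ s in a..b, Complex.log (((x : ℂ) + ε * Complex.I) - (s : ℂ)) * (ψ s : ℂ)) -
          ∫ s in a..b, Complex.log (((x : ℂ) - ε * Complex.I) - (s : ℂ)) * (ψ s : ℂ))
        (𝓝[>] 0)
        (𝓝 (2 * Real.pi * Complex.I * ((∫ s in x..b, ψ s : ℝ) : ℂ))) := by
  intro x
  obtain ⟨M, hM⟩ := hbdd
  have hM0 : 0 ≤ M := le_trans (abs_nonneg _) (hM 0)
  have hmin : ∀ (ε : ℝ) (s : ℝ), ((x : ℂ) - ε * Complex.I) - (s : ℂ)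
      = (x:ℂ) + ((-ε : ℝ) : ℂ) * Complex.I - s := by
    intro ε s; push_cast; ring
  -- continuity of the log factor for nonzero imaginary shift
  have hcont : ∀ δ : ℝ, δ ≠ 0 →
      Continuous fun s : ℝ => Complex.log ((x:ℂ) + (δ : ℂ) * Complex.I - s) := by
    intro δ hδ
    rw [continuous_iff_continuousAt]
    intro s
    have h1 : ContinuousAt (fun s : ℝ => (x:ℂ) + (δ:ℂ) * Complex.I - s) s := by fun_prop
    refine (continuousAt_clog ?_).comp h1
    rw [Complex.mem_slitPlane_iff]
    right
    simp [hδ]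
  -- integrability of each term
  have hψc : Measurable fun s : ℝ => (ψ s : ℂ) := Complex.measurable_ofReal.comp hmeas
  have hψint : MeasureTheory.IntegrableOn (fun s : ℝ => (ψ s : ℂ)) (Set.Ioc a b) := by
    refine MeasureTheory.Integrable.mono' (g := fun _ => M)
      ((MeasureTheory.integrableOn_const_iff (C := M)).2 (Or.inr measure_Ioc_lt_top))
      hψc.aestronglyMeasurable ?_
    filter_upwards with s
    simpa using hM s
  have hint : ∀ δ : ℝ, δ ≠ 0 →
      MeasureTheory.IntegrableOn
        (fun s : ℝ => Complex.log ((x:ℂ) + (δ:ℂ) * Complex.I - s) * (ψ s : ℂ)) (Set.Ioc a b) := by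
    intro δ hδ
    obtain ⟨C, hC⟩ := (isCompact_Icc (a := a) (b := b)).exists_bound_of_continuousOn
      ((hcont δ hδ).continuousOn)
    refine MeasureTheory.Integrable.bdd_mul (c := C) hψint
      ((hcont δ hδ).aestronglyMeasurable) ?_
    rw [MeasureTheory.ae_restrict_iff' measurableSet_Ioc]
    filter_upwards with s hs
    exact hC s (Set.Ioc_subset_Icc_self hs)
  -- the integrand difference and the limit function
  set F : ℝ → ℝ → ℂ := fun ε s =>
    (Complex.log (((x:ℂ) + ε * Complex.I) - s) - Complex.log (((x:ℂ) - ε * Complex.I) - s))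
      * (ψ s : ℂ) with hF
  set L : ℝ → ℂ :=
    Set.indicator (Set.Ioi x) (fun s => (2 * Real.pi * Complex.I) * (ψ s : ℂ)) with hL
  -- dominated convergence
  have key : Tendsto (fun ε => ∫ s in Set.Ioc a b, F ε s) (𝓝[>] (0:ℝ))
      (𝓝 (∫ s in Set.Ioc a b, L s)) := by
    refine MeasureTheory.tendsto_integral_filter_of_dominated_convergence
      (fun _ => 2 * Real.pi * M) ?_ ?_ ?_ ?_
    · filter_upwards [eventually_mem_nhdsWithin] with ε hε
      have hε' : (ε : ℝ) ≠ 0 := ne_of_gt hε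
      have hc2 : Continuous fun s : ℝ => Complex.log (((x:ℂ) - ε * Complex.I) - s) := by
        have := hcont (-ε) (neg_ne_zero.2 hε')
        simp_rw [← hmin ε] at this
        exact this
      exact (((hcont ε hε').sub hc2).aestronglyMeasurable).mul hψc.aestronglyMeasurable
    · filter_upwards [eventually_mem_nhdsWithin] with ε hε
      filter_upwards with s
      have hε : (0:ℝ) < ε := hε
      set z : ℂ := (x:ℂ) + ε * Complex.I - s with hz
      have hzim : z.im = ε := by simp [hz]
      have harg : z.arg ≠ Real.pi := by
        intro h
        rw [Complex.arg_eq_pi_iff] at h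
        rw [hzim] at h
        exact hε.ne' h.2
      have hconj : ((x:ℂ) - ε * Complex.I) - s = starRingEnd ℂ z := by
        apply Complex.ext <;> simp [hz]
      have h1 : Complex.log (((x:ℂ) - ε * Complex.I) - s)
          = starRingEnd ℂ (Complex.log z) := by
        rw [hconj, Complex.log_conj _ harg]
      have h2 : ‖Complex.log z - starRingEnd ℂ (Complex.log z)‖ ≤ 2 * Real.pi := by
        rw [Complex.sub_conj, norm_mul]
        simp only [Complex.norm_I, mul_one, Complex.norm_real, Real.norm_eq_abs]
        rw [abs_mul, abs_two]
        have : |(Complex.log z).im| ≤ Real.pi := by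
          rw [Complex.log_im]
          exact Complex.abs_arg_le_pi z
        nlinarith [Real.pi_pos]
      calc ‖F ε s‖ = ‖Complex.log z - starRingEnd ℂ (Complex.log z)‖ * |ψ s| := by
            rw [hF]
            simp only [← hz, h1, norm_mul, Complex.norm_real, Real.norm_eq_abs]
          _ ≤ (2 * Real.pi) * M :=
            mul_le_mul h2 (hM s) (abs_nonneg _) (by positivity)
    · exact (MeasureTheory.integrableOn_const_iff (C := 2 * Real.pi * M)).2
        (Or.inr measure_Ioc_lt_top)
    · have hne : ∀ᵐ s : ℝ, s ≠ x := by
        refine MeasureTheory.ae_iff.2 ?_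
        simpa using Real.volume_singleton (x := x)
      filter_upwards [MeasureTheory.ae_restrict_of_ae hne] with s hs
      have c1 : Continuous fun ε : ℝ => ((x:ℂ) + ε * Complex.I) - s := by fun_prop
      have c2 : Continuous fun ε : ℝ => ((x:ℂ) - ε * Complex.I) - s := by fun_prop
      have t1 : Tendsto (fun ε : ℝ => ((x:ℂ) + ε * Complex.I) - s) (𝓝[>] (0:ℝ))
          (𝓝 ((x:ℂ) - s)) :=
        (c1.tendsto' 0 ((x:ℂ) - s) (by simp)).mono_left nhdsWithin_le_nhds
      have t2 : Tendsto (fun ε : ℝ => ((x:ℂ) - ε * Complex.I) - s) (𝓝[>] (0:ℝ))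
          (𝓝 ((x:ℂ) - s)) :=
        (c2.tendsto' 0 ((x:ℂ) - s) (by simp)).mono_left nhdsWithin_le_nhds
      rcases lt_or_gt_of_ne hs with hsx | hsx
      · -- s < x : limit is 0
        have hLs : L s = 0 := by
          rw [hL, Set.indicator_of_notMem]
          simpa using hsx.le
        have hre : ((x:ℂ) - s) ∈ Complex.slitPlane := by
          rw [Complex.mem_slitPlane_iff]
          left
          simpa using sub_pos.2 hsx
        have h1 := t1.clog hre
        have h2 := t2.clog hre
        have h3 := (h1.sub h2).mul_const ((ψ s : ℂ))
        rw [sub_self, zero_mul] at h3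
        rw [hLs]
        exact h3
      · -- x < s : limit is 2πI ψ s
        have hre : ((x:ℂ) - s).re < 0 := by simpa using sub_neg.2 hsx
        have him : ((x:ℂ) - s).im = 0 := by simp
        have haffP : Tendsto (fun ε : ℝ => ((x:ℂ) + ε * Complex.I) - s)
            (𝓝[>] (0:ℝ)) (𝓝[{z : ℂ | 0 ≤ z.im}] ((x:ℂ) - s)) := by
          rw [tendsto_nhdsWithin_iff]
          refine ⟨t1, ?_⟩
          filter_upwards [eventually_mem_nhdsWithin] with ε hε
          have hε : (0:ℝ) < ε := hε
          simpa using hε.le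
        have haffN : Tendsto (fun ε : ℝ => ((x:ℂ) - ε * Complex.I) - s)
            (𝓝[>] (0:ℝ)) (𝓝[{z : ℂ | z.im < 0}] ((x:ℂ) - s)) := by
          rw [tendsto_nhdsWithin_iff]
          refine ⟨t2, ?_⟩
          filter_upwards [eventually_mem_nhdsWithin] with ε hε
          have hε : (0:ℝ) < ε := hε
          simpa using hε
        have h1 := (Complex.tendsto_log_nhdsWithin_im_nonneg_of_re_neg_of_im_zero hre him).comp haffP
        have h2 := (Complex.tendsto_log_nhdsWithin_im_neg_of_re_neg_of_im_zero hre him).comp haffN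
        have h3 := (h1.sub h2).mul_const ((ψ s : ℂ))
        have hLs : L s = (2 * Real.pi * Complex.I) * (ψ s : ℂ) := by
          rw [hL, Set.indicator_of_mem]
          exact hsx
        rw [hLs]
        convert h3 using 2
        · simp only [hF, Function.comp_apply]
        ring
  -- identify the ε-integrals with the statement's expression
  have heq : ∀ᶠ ε : ℝ in 𝓝[>] (0:ℝ),
      (∫ s in a..b, Complex.log (((x : ℂ) + ε * Complex.I) - (s : ℂ)) * (ψ s : ℂ)) -
        (∫ s in a..b, Complex.log (((x : ℂ) - ε * Complex.I) - (s : ℂ)) * (ψ s : ℂ))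
      = ∫ s in Set.Ioc a b, F ε s := by
    filter_upwards [eventually_mem_nhdsWithin] with ε hε
    have hε' : (ε : ℝ) ≠ 0 := ne_of_gt hε
    have hi2 : MeasureTheory.IntegrableOn
        (fun s : ℝ => Complex.log (((x:ℂ) - ε * Complex.I) - s) * (ψ s : ℂ)) (Set.Ioc a b) := by
      have := hint (-ε) (neg_ne_zero.2 hε')
      simp_rw [← hmin ε] at this
      exact this
    rw [intervalIntegral.integral_of_le hab.le, intervalIntegral.integral_of_le hab.le]
    rw [← MeasureTheory.integral_sub (hint ε hε') hi2]
    congr 1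
    ext s
    rw [hF]
    ring
  -- identify the limit integral
  have hψR : ∀ c d : ℝ, IntervalIntegrable ψ MeasureTheory.volume c d := by
    intro c d
    constructor <;>
    · refine MeasureTheory.Integrable.mono' (g := fun _ => M)
        ((MeasureTheory.integrableOn_const_iff (C := M)).2 (Or.inr measure_Ioc_lt_top))
        hmeas.aestronglyMeasurable ?_
      filter_upwards with s
      simpa using hM s
  have hIoo0 : ∀ c d : ℝ, c ≤ d → (∀ s ∈ Set.Ioo c d, ψ s = 0) → (∫ s in c..d, ψ s) = 0 := by
    intro c d hcd h0
    rw [intervalIntegral.integral_of_le hcd, MeasureTheory.integral_Ioc_eq_integral_Ioo]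
    rw [MeasureTheory.setIntegral_congr_fun measurableSet_Ioo (g := fun _ => (0:ℝ)) h0]
    simp
  have hreal : (∫ s in Set.Ioc a b ∩ Set.Ioi x, ψ s) = ∫ s in x..b, ψ s := by
    rcases le_or_gt x a with hxa | hxa
    · have hset : Set.Ioc a b ∩ Set.Ioi x = Set.Ioc a b := by
        apply Set.inter_eq_left.2
        intro s hs
        exact lt_of_le_of_lt hxa hs.1
      rw [hset]
      have hsplit : (∫ s in x..a, ψ s) + (∫ s in a..b, ψ s) = ∫ s in x..b, ψ s :=
        intervalIntegral.integral_add_adjacent_intervals (hψR x a) (hψR a b)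
      have h0 : (∫ s in x..a, ψ s) = 0 := by
        refine hIoo0 x a hxa fun s hs => hsupp s ?_
        intro hmem
        exact absurd hmem.1 (not_le.2 hs.2)
      rw [← hsplit, h0, zero_add, intervalIntegral.integral_of_le hab.le]
    · rcases le_or_gt x b with hxb | hxb
      · have hset : Set.Ioc a b ∩ Set.Ioi x = Set.Ioc x b := by
          ext s
          simp only [Set.mem_inter_iff, Set.mem_Ioc, Set.mem_Ioi]
          constructor
          · rintro ⟨⟨_, h2⟩, h3⟩; exact ⟨h3, h2⟩
          · rintro ⟨h1, h2⟩; exact ⟨⟨lt_trans hxa h1, h2⟩, h1⟩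
        rw [hset, intervalIntegral.integral_of_le hxb]
      · have hset : Set.Ioc a b ∩ Set.Ioi x = ∅ := by
          ext s
          simp only [Set.mem_inter_iff, Set.mem_Ioc, Set.mem_Ioi, Set.mem_empty_iff_false,
            iff_false, not_and]
          rintro ⟨_, h2⟩ h3
          exact absurd (lt_of_le_of_lt h2 hxb) (not_lt.2 h3.le)
        rw [hset]
        have h0 : (∫ s in b..x, ψ s) = 0 := by
          refine hIoo0 b x hxb.le fun s hs => hsupp s ?_
          intro hmem
          exact absurd hmem.2 (not_le.2 hs.1)
        rw [intervalIntegral.integral_symm, h0]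
        simp
  have hLval : (∫ s in Set.Ioc a b, L s)
      = 2 * Real.pi * Complex.I * ((∫ s in x..b, ψ s : ℝ) : ℂ) := by
    rw [hL, MeasureTheory.setIntegral_indicator measurableSet_Ioi]
    rw [MeasureTheory.integral_const_mul]
    rw [← hreal]
    congr 1
    exact integral_ofReal
  rw [← hLval]
  exact key.congr' (Filter.EventuallyEq.symm heq)
end
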